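/- For every real number c ≥ 1, ∫_{-2√c}^{2√c} ((1+c)/(2π)) · √(4c - t²)/((1+c)² - t²) dt = 1; that is, the Kesten–McKay density ρ_c is a probability density on ℝ. -/

import Mathlib

open Real Set

lemma km_aux (a b s : ℝ) (ha : 0 < a) (hb : 0 < b) (hs : 0 ≤ s) (hab : a ≤ b)
    (hs2 : b ^ 2 - a ^ 2 = s ^ 2) :
    ∫ t in (-a)..a, b / (2 * Real.pi) * Real.sqrt (a ^ 2 - t ^ 2) / (b ^ 2 - t ^ 2)
      = (b - s) / 2 := by
  set F : ℝ → ℝ := fun t =>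
    b / (2 * Real.pi) *
      (Real.arcsin (t / a) -
        s / b * Real.arcsin (s * t / (a * Real.sqrt (b ^ 2 - t ^ 2)))) with hF_def
  have hderiv : ∀ t ∈ Ioo (-a) a,
      HasDerivAt F (b / (2 * Real.pi) * Real.sqrt (a ^ 2 - t ^ 2) / (b ^ 2 - t ^ 2)) t := by
    intro t ht
    have ht2 : t ^ 2 < a ^ 2 := sq_lt_sq' ht.1 ht.2
    have hw2 : 0 < a ^ 2 - t ^ 2 := by linarith
    have hu2 : 0 < b ^ 2 - t ^ 2 := by nlinarith [sq_nonneg s]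
    set w : ℝ := Real.sqrt (a ^ 2 - t ^ 2) with hw_def
    set u : ℝ := Real.sqrt (b ^ 2 - t ^ 2) with hu_def
    have hw : 0 < w := Real.sqrt_pos.2 hw2
    have hu : 0 < u := Real.sqrt_pos.2 hu2
    have hwsq : w ^ 2 = a ^ 2 - t ^ 2 := Real.sq_sqrt hw2.le
    have husq : u ^ 2 = b ^ 2 - t ^ 2 := Real.sq_sqrt hu2.le
    have hta1 : t / a ≠ -1 := by
      intro h
      have : t = -a := by field_simp at h; linarith
      exact absurd (this ▸ ht.1) (lt_irrefl _)
    have hta2 : t / a ≠ 1 := by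
      intro h
      have : t = a := by field_simp at h; exact h
      exact absurd (this ▸ ht.2) (lt_irrefl _)
    have d1 : HasDerivAt (fun t : ℝ => Real.arcsin (t / a))
        (1 / Real.sqrt (1 - (t / a) ^ 2) * (1 / a)) t := by
      have := (Real.hasDerivAt_arcsin hta1 hta2).comp t ((hasDerivAt_id t).div_const a)
      simpa [Function.comp_def] using this
    have hdsqrt : HasDerivAt (fun t : ℝ => a * Real.sqrt (b ^ 2 - t ^ 2))
        (a * (1 / (2 * u) * (0 - 2 * t))) t := by
      have h1 : HasDerivAt (fun t : ℝ => b ^ 2 - t ^ 2) (0 - 2 * t) t := by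
        simpa using ((hasDerivAt_pow 2 t).const_sub (b ^ 2))
      exact ((Real.hasDerivAt_sqrt hu2.ne').comp t h1).const_mul a
    have hden : a * u ≠ 0 := by positivity
    have dg : HasDerivAt (fun t : ℝ => s * t / (a * Real.sqrt (b ^ 2 - t ^ 2)))
        ((s * (a * u) - s * t * (a * (1 / (2 * u) * (0 - 2 * t)))) / (a * u) ^ 2) t := by
      have hn : HasDerivAt (fun t : ℝ => s * t) s t := by
        simpa using (hasDerivAt_id t).const_mul s
      have := hn.div hdsqrt hden
      simpa [Function.comp_def, Pi.div_def, ← hu_def] using this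
    have hg2 : (s * t / (a * u)) ^ 2 < 1 := by
      rw [div_pow, div_lt_one (by positivity)]
      have h : (a * u) ^ 2 = a ^ 2 * (b ^ 2 - t ^ 2) := by rw [mul_pow, husq]
      rw [h]
      nlinarith [sq_nonneg (s * t), sq_nonneg t]
    have hg1 : s * t / (a * u) ≠ -1 := by
      intro h; rw [h] at hg2; norm_num at hg2
    have hg1' : s * t / (a * u) ≠ 1 := by
      intro h; rw [h] at hg2; norm_num at hg2
    have d2 : HasDerivAt (fun t : ℝ => Real.arcsin (s * t / (a * Real.sqrt (b ^ 2 - t ^ 2))))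
        (1 / Real.sqrt (1 - (s * t / (a * u)) ^ 2) *
          ((s * (a * u) - s * t * (a * (1 / (2 * u) * (0 - 2 * t)))) / (a * u) ^ 2)) t :=
      HasDerivAt.comp (h₂ := Real.arcsin) t (Real.hasDerivAt_arcsin hg1 hg1') dg
    have dF : HasDerivAt F
        (b / (2 * Real.pi) *
          (1 / Real.sqrt (1 - (t / a) ^ 2) * (1 / a) -
            s / b * (1 / Real.sqrt (1 - (s * t / (a * u)) ^ 2) *
              ((s * (a * u) - s * t * (a * (1 / (2 * u) * (0 - 2 * t)))) / (a * u) ^ 2)))) t :=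
      (d1.sub (d2.const_mul (s / b))).const_mul (b / (2 * Real.pi))
    convert dF using 1
    have e1 : Real.sqrt (1 - (t / a) ^ 2) = w / a := by
      rw [show (1 : ℝ) - (t / a) ^ 2 = (a ^ 2 - t ^ 2) / a ^ 2 by field_simp]
      rw [Real.sqrt_div hw2.le, Real.sqrt_sq ha.le]
    have e2 : Real.sqrt (1 - (s * t / (a * u)) ^ 2) = b * w / (a * u) := by
      rw [show (1 : ℝ) - (s * t / (a * u)) ^ 2 = (b * w / (a * u)) ^ 2 by
        field_simp
        linear_combination (a ^ 2) * husq - (b ^ 2) * hwsq + (t ^ 2) * hs2]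
      exact Real.sqrt_sq (by positivity)
    rw [e1, e2, ← husq]
    have hN : s * (a * u) - s * t * (a * (1 / (2 * u) * (0 - 2 * t))) = s * a * b ^ 2 / u := by
      field_simp
      linear_combination (2 * s) * husq
    rw [hN]
    field_simp
    ring_nf
    linear_combination hwsq - husq - hs2
  have hcont : ContinuousOn F (Icc (-a) a) := by
    rcases eq_or_lt_of_le hs with h0 | hspos
    · have hFeq : F = fun t => b / (2 * Real.pi) * Real.arcsin (t / a) := by
        funext t
        rw [hF_def]
        simp [← h0]
      rw [hFeq]
      exact (continuous_const.mul
        (Real.continuous_arcsin.comp (continuous_id.div_const a))).continuousOn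
    · have hne : ∀ t ∈ Icc (-a) a, a * Real.sqrt (b ^ 2 - t ^ 2) ≠ 0 := by
        intro t ht
        have ht2 : t ^ 2 ≤ a ^ 2 := sq_le_sq' ht.1 ht.2
        have : 0 < b ^ 2 - t ^ 2 := by nlinarith
        positivity
      apply ContinuousOn.mul continuousOn_const
      apply ContinuousOn.sub
      · exact (Real.continuous_arcsin.comp (continuous_id.div_const a)).continuousOn
      · apply ContinuousOn.mul continuousOn_const
        apply Real.continuous_arcsin.comp_continuousOn
        exact ContinuousOn.div (continuous_const.mul continuous_id).continuousOn
          (continuous_const.mul (Real.continuous_sqrt.comp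
            (continuous_const.sub (continuous_pow 2)))).continuousOn hne
  have hle : -a ≤ a := by linarith
  have hint : IntervalIntegrable
      (fun t => b / (2 * Real.pi) * Real.sqrt (a ^ 2 - t ^ 2) / (b ^ 2 - t ^ 2))
      MeasureTheory.volume (-a) a := by
    apply intervalIntegral.intervalIntegrable_deriv_of_nonneg (g := F)
    · rwa [uIcc_of_le hle]
    · rwa [min_eq_left hle, max_eq_right hle]
    · intro t ht
      rw [min_eq_left hle, max_eq_right hle] at ht
      have ht2 : t ^ 2 < a ^ 2 := sq_lt_sq' ht.1 ht.2
      have hu2 : 0 < b ^ 2 - t ^ 2 := by nlinarith [sq_nonneg s]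
      have hKpos : (0:ℝ) ≤ b / (2 * Real.pi) := by positivity
      exact div_nonneg (mul_nonneg hKpos (Real.sqrt_nonneg _)) hu2.le
  rw [intervalIntegral.integral_eq_sub_of_hasDerivAt_of_le hle hcont hderiv hint]
  have hpi : Real.pi ≠ 0 := Real.pi_ne_zero
  rcases eq_or_lt_of_le hs with h0 | hspos
  · rw [hF_def]
    simp only [← h0]
    rw [div_self ha.ne', neg_div, div_self ha.ne']
    simp [Real.arcsin_one, Real.arcsin_neg_one]
    field_simp
    linarith [h0]
  · have hsa : Real.sqrt (b ^ 2 - a ^ 2) = s := by rw [hs2, Real.sqrt_sq hs]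
    have h1 : s * a / (a * Real.sqrt (b ^ 2 - a ^ 2)) = 1 := by
      rw [hsa]; field_simp
    have h2 : s * -a / (a * Real.sqrt (b ^ 2 - (-a) ^ 2)) = -1 := by
      rw [neg_sq, hsa]; field_simp
    rw [hF_def]
    simp only
    rw [div_self ha.ne', neg_div, div_self ha.ne', h1, h2, Real.arcsin_one,
      Real.arcsin_neg_one]
    field_simp
    ring

/-- For every real `c ≥ 1`, the Kesten–McKay density integrates to `1` over its
support `[-2√c, 2√c]`. -/
theorem stmt_8 (c : ℝ) (hc : 1 ≤ c) :
    ∫ t in (-(2 * Real.sqrt c))..(2 * Real.sqrt c),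
        (1 + c) / (2 * Real.pi) * Real.sqrt (4 * c - t ^ 2) / ((1 + c) ^ 2 - t ^ 2) =
      1 := by
  have hc0 : (0 : ℝ) < c := lt_of_lt_of_le one_pos hc
  have ha2 : (2 * Real.sqrt c) ^ 2 = 4 * c := by
    rw [mul_pow, Real.sq_sqrt hc0.le]; ring
  have hab : 2 * Real.sqrt c ≤ 1 + c := by
    nlinarith [sq_nonneg (Real.sqrt c - 1), Real.sq_sqrt hc0.le]
  have h := km_aux (2 * Real.sqrt c) (1 + c) (c - 1) (by positivity) (by linarith)
    (by linarith) hab (by rw [ha2]; ring)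
  simp only [show (4 : ℝ) * c = (2 * Real.sqrt c) ^ 2 from ha2.symm]
  rw [h]
  ring
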